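/- Let P₁,…,Pₙ be cameras, H ∈ GL₄(ℝ), and H₁,…,Hₙ ∈ GL₃(ℝ). Then for all i, j there exists a nonzero real scalar μ with ψ(Hᵢ⁻¹PᵢH, Hⱼ⁻¹PⱼH) = μ · Hᵢᵀ ψ(Pᵢ,Pⱼ) Hⱼ. Consequently, for any family {F^{ij}} of fundamental matrices and any H₁,…,Hₙ ∈ GL₃(ℝ), the family {F^{ij}} is compatible if and only if the family {G^{ij}} with G^{ij} := Hᵢᵀ F^{ij} Hⱼ is compatible. -/

import Mathlib

open Matrix

/-- The 6×6 matrix whose first three rows form the block `[P₁ | x | 0]` and whose last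
three rows form the block `[P₂ | 0 | y]`. -/
noncomputable def bigMat (P₁ P₂ : Matrix (Fin 3) (Fin 4) ℝ) (x y : Fin 3 → ℝ) :
    Matrix (Fin 6) (Fin 6) ℝ :=
  fun i j =>
    if hi : (i : ℕ) < 3 then
      if hj : (j : ℕ) < 4 then P₁ ⟨(i : ℕ), hi⟩ ⟨(j : ℕ), hj⟩
      else if (j : ℕ) = 4 then x ⟨(i : ℕ), hi⟩ else 0
    else
      if hj : (j : ℕ) < 4 then P₂ ⟨(i : ℕ) - 3, by have := i.isLt; omega⟩ ⟨(j : ℕ), hj⟩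
      else if (j : ℕ) = 4 then 0
      else y ⟨(i : ℕ) - 3, by have := i.isLt; omega⟩

/-- `psi P₁ P₂` is the unique 3×3 matrix `F` such that for all `x y : ℝ³`,
`xᵀ F y = det [P₁ | x | 0; P₂ | 0 | y]`.  (Since the determinant is bilinear in `(x, y)`,
this matrix is obtained by evaluating at pairs of standard basis vectors.) -/
noncomputable def psi (P₁ P₂ : Matrix (Fin 3) (Fin 4) ℝ) : Matrix (Fin 3) (Fin 3) ℝ :=
  fun a b => (bigMat P₁ P₂ (Pi.single a 1) (Pi.single b 1)).det

/-- A camera is a real 3×4 matrix of rank 3. -/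
def IsCamera (P : Matrix (Fin 3) (Fin 4) ℝ) : Prop := P.rank = 3

/-- A family of matrices `F i j`, indexed by the edges `E`, is compatible if there are
cameras `P i` and nonzero scalars `lam i j` with `lam i j • F i j = psi (P i) (P j)`
for every indexing pair. -/
def Compatible (n : ℕ) (E : Fin n → Fin n → Prop)
    (F : Fin n → Fin n → Matrix (Fin 3) (Fin 3) ℝ) : Prop :=
  ∃ (P : Fin n → Matrix (Fin 3) (Fin 4) ℝ) (lam : Fin n → Fin n → ℝ),
    (∀ i, IsCamera (P i)) ∧
      ∀ i j, E i j → lam i j ≠ 0 ∧ lam i j • F i j = psi (P i) (P j)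

noncomputable def topR (x : Fin 3 → ℝ) : Matrix (Fin 3) (Fin 2) ℝ :=
  fun i j => if j = 0 then x i else 0
noncomputable def botR (y : Fin 3 → ℝ) : Matrix (Fin 3) (Fin 2) ℝ :=
  fun i j => if j = 0 then 0 else y i

def eR : (Fin 3 ⊕ Fin 3) ≃ Fin 6 := finSumFinEquiv
def eC : (Fin 4 ⊕ Fin 2) ≃ Fin 6 := finSumFinEquiv

lemma bigMat_eq (P₁ P₂ : Matrix (Fin 3) (Fin 4) ℝ) (x y : Fin 3 → ℝ) :
    bigMat P₁ P₂ x y =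
      (fromBlocks P₁ (topR x) P₂ (botR y)).submatrix eR.symm eC.symm := by
  ext i j
  fin_cases i <;> fin_cases j <;> rfl

noncomputable def D33 (A B : Matrix (Fin 3) (Fin 3) ℝ) : Matrix (Fin 6) (Fin 6) ℝ :=
  (fromBlocks A 0 0 B).submatrix eR.symm eR.symm
noncomputable def D42 (K : Matrix (Fin 4) (Fin 4) ℝ) : Matrix (Fin 6) (Fin 6) ℝ :=
  (fromBlocks K 0 0 (1 : Matrix (Fin 2) (Fin 2) ℝ)).submatrix eC.symm eC.symm

lemma det_D33 (A B : Matrix (Fin 3) (Fin 3) ℝ) : (D33 A B).det = A.det * B.det := by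
  rw [D33, det_submatrix_equiv_self, det_fromBlocks_zero₂₁]

lemma det_D42 (K : Matrix (Fin 4) (Fin 4) ℝ) : (D42 K).det = K.det := by
  rw [D42, det_submatrix_equiv_self, det_fromBlocks_zero₂₁]
  simp

lemma topR_mulVec (A : Matrix (Fin 3) (Fin 3) ℝ) (x : Fin 3 → ℝ) :
    A * topR x = topR (A *ᵥ x) := by
  ext i j
  fin_cases j <;> simp [topR, mul_apply, mulVec, dotProduct]

lemma botR_mulVec (B : Matrix (Fin 3) (Fin 3) ℝ) (y : Fin 3 → ℝ) :
    B * botR y = botR (B *ᵥ y) := by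
  ext i j
  fin_cases j <;> simp [botR, mul_apply, mulVec, dotProduct]

lemma D33_mul_bigMat (A B : Matrix (Fin 3) (Fin 3) ℝ) (P₁ P₂ : Matrix (Fin 3) (Fin 4) ℝ)
    (x y : Fin 3 → ℝ) :
    D33 A B * bigMat P₁ P₂ x y = bigMat (A * P₁) (B * P₂) (A *ᵥ x) (B *ᵥ y) := by
  rw [bigMat_eq, bigMat_eq, D33, submatrix_mul_equiv, fromBlocks_multiply]
  simp [topR_mulVec, botR_mulVec]

lemma bigMat_mul_D42 (K : Matrix (Fin 4) (Fin 4) ℝ) (P₁ P₂ : Matrix (Fin 3) (Fin 4) ℝ)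
    (x y : Fin 3 → ℝ) :
    bigMat P₁ P₂ x y * D42 K = bigMat (P₁ * K) (P₂ * K) x y := by
  rw [bigMat_eq, bigMat_eq, D42, submatrix_mul_equiv, fromBlocks_multiply]
  simp

noncomputable def embX (x : Fin 3 → ℝ) : Fin 6 → ℝ :=
  fun i => if h : (i : ℕ) < 3 then x ⟨(i : ℕ), h⟩ else 0
noncomputable def embY (y : Fin 3 → ℝ) : Fin 6 → ℝ :=
  fun i => if h : (i : ℕ) < 3 then 0 else y ⟨(i : ℕ) - 3, by have := i.isLt; omega⟩

lemma det_updateColumn_sum' {n : Type*} [DecidableEq n] [Fintype n]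
    {m : Type*} [Fintype m] (M : Matrix n n ℝ) (j : n) (v : m → n → ℝ) (c : m → ℝ) :
    (M.updateCol j (∑ a, c a • v a)).det = ∑ a, c a * (M.updateCol j (v a)).det := by
  classical
  induction (Finset.univ : Finset m) using Finset.induction_on with
  | empty => simp [det_eq_zero_of_column_eq_zero j]
  | insert _ _ h ih =>
      rw [Finset.sum_insert h, Finset.sum_insert h, det_updateCol_add,
        det_updateCol_smul, ih]

lemma bigMat_updateX (P₁ P₂ : Matrix (Fin 3) (Fin 4) ℝ) (x y : Fin 3 → ℝ) :
    bigMat P₁ P₂ x y = (bigMat P₁ P₂ 0 y).updateCol 4 (embX x) := by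
  ext i j
  rw [updateCol_apply]
  fin_cases i <;> fin_cases j <;> simp [bigMat, embX]

lemma bigMat_updateY (P₁ P₂ : Matrix (Fin 3) (Fin 4) ℝ) (x y : Fin 3 → ℝ) :
    bigMat P₁ P₂ x y = (bigMat P₁ P₂ x 0).updateCol 5 (embY y) := by
  ext i j
  rw [updateCol_apply]
  fin_cases i <;> fin_cases j <;> simp [bigMat, embY]

lemma embX_sum (x : Fin 3 → ℝ) : embX x = ∑ a, x a • embX (Pi.single a 1) := by
  funext i
  simp only [Finset.sum_apply, Pi.smul_apply, embX, smul_eq_mul]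
  by_cases h : (i : ℕ) < 3 <;> simp [h]
  · rw [Finset.sum_eq_single ⟨(i : ℕ), h⟩] <;> simp [Pi.single_apply]
    intro b hb; exact fun hc => absurd hc.symm hb

lemma embY_sum (y : Fin 3 → ℝ) : embY y = ∑ b, y b • embY (Pi.single b 1) := by
  funext i
  simp only [Finset.sum_apply, Pi.smul_apply, embY, smul_eq_mul]
  by_cases h : (i : ℕ) < 3 <;> simp [h]
  · rw [Finset.sum_eq_single ⟨(i : ℕ) - 3, by have := i.isLt; omega⟩] <;>
      simp [Pi.single_apply]
    intro b hb; exact fun hc => absurd hc.symm hb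

lemma det_bigMat_expandX (P₁ P₂ : Matrix (Fin 3) (Fin 4) ℝ) (x y : Fin 3 → ℝ) :
    (bigMat P₁ P₂ x y).det = ∑ a, x a * (bigMat P₁ P₂ (Pi.single a 1) y).det := by
  calc (bigMat P₁ P₂ x y).det
      = ((bigMat P₁ P₂ 0 y).updateCol 4 (∑ a, x a • embX (Pi.single a 1))).det := by
        rw [← embX_sum, ← bigMat_updateX]
    _ = ∑ a, x a * ((bigMat P₁ P₂ 0 y).updateCol 4 (embX (Pi.single a 1))).det := by
        apply det_updateColumn_sum'
    _ = ∑ a, x a * (bigMat P₁ P₂ (Pi.single a 1) y).det := by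
        refine Finset.sum_congr rfl fun a _ => ?_
        rw [← bigMat_updateX]

lemma det_bigMat_expandY (P₁ P₂ : Matrix (Fin 3) (Fin 4) ℝ) (x y : Fin 3 → ℝ) :
    (bigMat P₁ P₂ x y).det = ∑ b, y b * (bigMat P₁ P₂ x (Pi.single b 1)).det := by
  calc (bigMat P₁ P₂ x y).det
      = ((bigMat P₁ P₂ x 0).updateCol 5 (∑ b, y b • embY (Pi.single b 1))).det := by
        rw [← embY_sum, ← bigMat_updateY]
    _ = ∑ b, y b * ((bigMat P₁ P₂ x 0).updateCol 5 (embY (Pi.single b 1))).det := by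
        apply det_updateColumn_sum'
    _ = ∑ b, y b * (bigMat P₁ P₂ x (Pi.single b 1)).det := by
        refine Finset.sum_congr rfl fun b _ => ?_
        rw [← bigMat_updateY]

lemma det_bigMat_bilinear (P₁ P₂ : Matrix (Fin 3) (Fin 4) ℝ) (x y : Fin 3 → ℝ) :
    (bigMat P₁ P₂ x y).det =
      ∑ a, ∑ b, x a * (y b * (bigMat P₁ P₂ (Pi.single a 1) (Pi.single b 1)).det) := by
  rw [det_bigMat_expandX]
  exact Finset.sum_congr rfl fun a _ => by
    rw [det_bigMat_expandY, Finset.mul_sum]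


lemma psi_transform (P₁ P₂ : Matrix (Fin 3) (Fin 4) ℝ) (A B : Matrix (Fin 3) (Fin 3) ℝ)
    (H : Matrix (Fin 4) (Fin 4) ℝ) (hA : A.det ≠ 0) (hB : B.det ≠ 0) (hH : H.det ≠ 0) :
    psi (A⁻¹ * P₁ * H) (B⁻¹ * P₂ * H) =
      ((A.det * B.det)⁻¹ * H.det) • (Aᵀ * psi P₁ P₂ * B) := by
  have hA' : IsUnit A.det := isUnit_iff_ne_zero.mpr hA
  have hB' : IsUnit B.det := isUnit_iff_ne_zero.mpr hB
  have hAB : A.det * B.det ≠ 0 := mul_ne_zero hA hB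
  have key1 : ∀ x y : Fin 3 → ℝ,
      A.det * B.det * (bigMat (A⁻¹ * P₁ * H) (B⁻¹ * P₂ * H) x y).det
        = (bigMat (P₁ * H) (P₂ * H) (A *ᵥ x) (B *ᵥ y)).det := by
    intro x y
    rw [← det_D33, ← det_mul, D33_mul_bigMat,
      ← Matrix.mul_assoc A (A⁻¹ * P₁) H, ← Matrix.mul_assoc A A⁻¹ P₁,
      ← Matrix.mul_assoc B (B⁻¹ * P₂) H, ← Matrix.mul_assoc B B⁻¹ P₂,
      mul_nonsing_inv A hA', mul_nonsing_inv B hB', Matrix.one_mul, Matrix.one_mul]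
  have key2 : ∀ u v : Fin 3 → ℝ,
      (bigMat (P₁ * H) (P₂ * H) u v).det = H.det * (bigMat P₁ P₂ u v).det := by
    intro u v
    have hdet : (bigMat P₁ P₂ u v).det * (D42 H).det
        = (bigMat (P₁ * H) (P₂ * H) u v).det := by
      rw [← det_mul, bigMat_mul_D42]
    rw [det_D42] at hdet
    linear_combination -hdet
  ext a b
  have e1 := key1 (Pi.single a 1) (Pi.single b 1)
  rw [key2] at e1
  have e2 : (bigMat P₁ P₂ (A *ᵥ Pi.single a 1) (B *ᵥ Pi.single b 1)).det
      = (Aᵀ * psi P₁ P₂ * B) a b := by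
    rw [det_bigMat_bilinear]
    simp only [mul_apply, transpose_apply, mulVec_single_one, col_apply, mul_one, psi,
      Finset.sum_mul, Finset.mul_sum]
    rw [Finset.sum_comm]
    refine Finset.sum_congr rfl fun c _ => Finset.sum_congr rfl fun d _ => by ring
  rw [e2] at e1
  have e1' : A.det * B.det * psi (A⁻¹ * P₁ * H) (B⁻¹ * P₂ * H) a b
      = H.det * (Aᵀ * psi P₁ P₂ * B) a b := e1
  rw [Matrix.smul_apply, smul_eq_mul]
  calc psi (A⁻¹ * P₁ * H) (B⁻¹ * P₂ * H) a b
      = (A.det * B.det)⁻¹ * (A.det * B.det * psi (A⁻¹ * P₁ * H) (B⁻¹ * P₂ * H) a b) := by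
        rw [← mul_assoc, inv_mul_cancel₀ hAB, one_mul]
    _ = (A.det * B.det)⁻¹ * (H.det * (Aᵀ * psi P₁ P₂ * B) a b) := by rw [e1']
    _ = (A.det * B.det)⁻¹ * H.det * (Aᵀ * psi P₁ P₂ * B) a b := by ring

lemma rank_transform (Q : Matrix (Fin 3) (Fin 4) ℝ) (A : Matrix (Fin 3) (Fin 3) ℝ)
    (H : Matrix (Fin 4) (Fin 4) ℝ) (hA : A.det ≠ 0) (hH : H.det ≠ 0)
    (hQ : Q.rank = 3) : (A⁻¹ * Q * H).rank = 3 := by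
  have hA' : IsUnit (A⁻¹).det := isUnit_nonsing_inv_det A (isUnit_iff_ne_zero.mpr hA)
  calc (A⁻¹ * Q * H).rank
      = (A⁻¹ * Q).rank := rank_mul_eq_left_of_isUnit_det H (A⁻¹ * Q)
        (isUnit_iff_ne_zero.mpr hH)
    _ = Q.rank := rank_mul_eq_right_of_isUnit_det A⁻¹ Q hA'
    _ = 3 := hQ

lemma compat_push (n : ℕ) (E : Fin n → Fin n → Prop)
    (F : Fin n → Fin n → Matrix (Fin 3) (Fin 3) ℝ)
    (K : Fin n → Matrix (Fin 3) (Fin 3) ℝ) (hK : ∀ i, (K i).det ≠ 0) :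
    Compatible n E F → Compatible n E (fun i j => (K i)ᵀ * F i j * K j) := by
  rintro ⟨Q, lam, hQ, h⟩
  refine ⟨fun i => (K i)⁻¹ * Q i * 1, fun i j => ((K i).det * (K j).det)⁻¹ * lam i j,
    fun i => rank_transform (Q i) (K i) 1 (hK i) (by simp) (hQ i), fun i j hij => ?_⟩
  obtain ⟨h0, heq⟩ := h i j hij
  refine ⟨mul_ne_zero (inv_ne_zero (mul_ne_zero (hK i) (hK j))) h0, ?_⟩
  have ht := psi_transform (Q i) (Q j) (K i) (K j) 1 (hK i) (hK j) (by simp)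
  rw [ht, ← heq, det_one, mul_one, Matrix.mul_smul, Matrix.smul_mul, smul_smul]


theorem stmt4 (n : ℕ) (P : Fin n → Matrix (Fin 3) (Fin 4) ℝ)
    (hP : ∀ i, IsCamera (P i))
    (H : Matrix (Fin 4) (Fin 4) ℝ) (hH : H.det ≠ 0)
    (H₁ : Fin n → Matrix (Fin 3) (Fin 3) ℝ) (hH₁ : ∀ i, (H₁ i).det ≠ 0) :
    (∀ i j, ∃ μ : ℝ, μ ≠ 0 ∧
        psi ((H₁ i)⁻¹ * P i * H) ((H₁ j)⁻¹ * P j * H) =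
          μ • ((H₁ i)ᵀ * psi (P i) (P j) * H₁ j)) ∧
      (∀ (E : Fin n → Fin n → Prop) (F : Fin n → Fin n → Matrix (Fin 3) (Fin 3) ℝ),
        (∀ i j, E i j → (F i j).rank = 2) →
        (Compatible n E F ↔ Compatible n E (fun i j => (H₁ i)ᵀ * F i j * H₁ j))) := by
  constructor
  · intro i j
    exact ⟨((H₁ i).det * (H₁ j).det)⁻¹ * H.det,
      mul_ne_zero (inv_ne_zero (mul_ne_zero (hH₁ i) (hH₁ j))) hH,
      psi_transform (P i) (P j) (H₁ i) (H₁ j) H (hH₁ i) (hH₁ j) hH⟩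
  · intro E F _hF
    constructor
    · exact compat_push n E F H₁ hH₁
    · intro hG
      have hK : ∀ i, ((H₁ i)⁻¹).det ≠ 0 := fun i => by
        rw [det_nonsing_inv, Ring.inverse_eq_inv']
        exact inv_ne_zero (hH₁ i)
      have h2 := compat_push n E _ (fun i => (H₁ i)⁻¹) hK hG
      have hfix : (fun i j => ((H₁ i)⁻¹)ᵀ * ((H₁ i)ᵀ * F i j * H₁ j) * (H₁ j)⁻¹) = F := by
        funext i j
        have h1 : ((H₁ i)⁻¹)ᵀ * (H₁ i)ᵀ = 1 := by
          rw [← transpose_mul, mul_nonsing_inv _ (isUnit_iff_ne_zero.mpr (hH₁ i)),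
            transpose_one]
        have h2' : H₁ j * (H₁ j)⁻¹ = 1 := mul_nonsing_inv _ (isUnit_iff_ne_zero.mpr (hH₁ j))
        calc ((H₁ i)⁻¹)ᵀ * ((H₁ i)ᵀ * F i j * H₁ j) * (H₁ j)⁻¹
            = (((H₁ i)⁻¹)ᵀ * (H₁ i)ᵀ) * (F i j * (H₁ j * (H₁ j)⁻¹)) := by
              simp only [Matrix.mul_assoc]
          _ = F i j := by rw [h1, h2', Matrix.one_mul, Matrix.mul_one]
      rw [← hfix]
      exact h2
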